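/- Let Z² denote the ℂ-vector space of Chevalley–Eilenberg 2-cocycles c : 𝔰 × 𝔰 → ℂ for the trivial representation of 𝔰 on ℂ, and B² ⊆ Z² the subspace of 2-coboundaries. Then the linear map Z² → ℂ^{r(r−1)/2} sending c to the tuple (c(H_j, H_k))_{1 ≤ j < k ≤ r} is surjective with kernel exactly B². Consequently it induces a ℂ-linear isomorphism between the second Chevalley–Eilenberg cohomology space H²_{CE}(𝔰) = Z²/B² and ℂ^{r(r−1)/2}. -/

import Mathlib

variable {r : ℕ} {𝔰 : Type} [LieRing 𝔰] [LieAlgebra ℝ 𝔰]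

/-- The `j`-th block `𝔰_j = ℝH_j ⊕ V_j ⊕ ℝE_j` of the Pyatetskii–Shapiro decomposition. -/
def psBlock (H E : Fin r → 𝔰) (V : Fin r → Submodule ℝ 𝔰) (j : Fin r) : Submodule ℝ 𝔰 :=
  Submodule.span ℝ {H j} ⊔ V j ⊔ Submodule.span ℝ {E j}

/-- The subspace `𝔰_r ⊕ … ⊕ 𝔰_{j+1}`. -/
def psUpper (H E : Fin r → 𝔰) (V : Fin r → Submodule ℝ 𝔰) (j : Fin r) : Submodule ℝ 𝔰 :=
  ⨆ k : Fin r, ⨆ _ : j < k, psBlock H E V k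

/-- `𝔰` is a Lie algebra in Pyatetskii–Shapiro normal form of rank `r`, with data
`H_j, E_j, V_j, Ω_j`. -/
structure IsPSAlgebra (H E : Fin r → 𝔰) (V : Fin r → Submodule ℝ 𝔰)
    (Ω : Fin r → 𝔰 →ₗ[ℝ] 𝔰 →ₗ[ℝ] ℝ) : Prop where
  /-- the rank is at least one -/
  rank_pos : 0 < r
  /-- as a vector space, `𝔰` is the direct sum of the blocks `𝔰_j` … -/
  total : (⨆ j, psBlock H E V j) = ⊤
  indep : iSupIndep (psBlock H E V)
  /-- … and each block is the internal direct sum `ℝH_j ⊕ V_j ⊕ ℝE_j` -/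
  inner_indep : ∀ (j : Fin r) (a b : ℝ), ∀ v ∈ V j,
    a • H j + v + b • E j = 0 → a = 0 ∧ v = 0 ∧ b = 0
  /-- `Ω_j` is antisymmetric on `V_j` … -/
  omega_anti : ∀ j, ∀ v ∈ V j, ∀ w ∈ V j, Ω j v w = - Ω j w v
  /-- … and nondegenerate on `V_j` -/
  omega_nondeg : ∀ j, ∀ v ∈ V j, (∀ w ∈ V j, Ω j v w = 0) → v = 0
  /-- `[v, E_j] = 0` for `v ∈ V_j` -/
  lie_vE : ∀ j, ∀ v ∈ V j, ⁅v, E j⁆ = 0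
  /-- `[v, v'] = Ω_j(v, v') • E_j` for `v, v' ∈ V_j` -/
  lie_vv : ∀ j, ∀ v ∈ V j, ∀ w ∈ V j, ⁅v, w⁆ = Ω j v w • E j
  /-- `[H_j, v + z•E_j] = v + 2z•E_j` -/
  lie_H : ∀ j, ∀ v ∈ V j, ∀ z : ℝ, ⁅H j, v + z • E j⁆ = v + (2 * z) • E j
  /-- `[X, H_j] = 0` for `X ∈ 𝔰_r ⊕ … ⊕ 𝔰_{j+1}` -/
  lie_upper_H : ∀ j, ∀ X ∈ psUpper H E V j, ⁅X, H j⁆ = 0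
  /-- `[X, E_j] = 0` for `X ∈ 𝔰_r ⊕ … ⊕ 𝔰_{j+1}` -/
  lie_upper_E : ∀ j, ∀ X ∈ psUpper H E V j, ⁅X, E j⁆ = 0
  /-- `[X, V_j] ⊆ V_j` for `X ∈ 𝔰_r ⊕ … ⊕ 𝔰_{j+1}` -/
  lie_upper_V : ∀ j, ∀ X ∈ psUpper H E V j, ∀ v ∈ V j, ⁅X, v⁆ ∈ V j
  /-- `ad_X ∈ 𝔰𝔭(V_j, Ω_j)` for `X ∈ 𝔰_r ⊕ … ⊕ 𝔰_{j+1}` -/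
  omega_invar : ∀ j, ∀ X ∈ psUpper H E V j, ∀ v ∈ V j, ∀ w ∈ V j,
    Ω j ⁅X, v⁆ w + Ω j v ⁅X, w⁆ = 0

/-- `c` is a Chevalley–Eilenberg 2-cocycle on `𝔰` for the trivial representation on `ℂ`. -/
def IsCE2Cocycle (c : 𝔰 →ₗ[ℝ] 𝔰 →ₗ[ℝ] ℂ) : Prop :=
  (∀ X Y : 𝔰, c X Y = - c Y X) ∧
  (∀ X Y Z : 𝔰, c ⁅X, Y⁆ Z + c ⁅Y, Z⁆ X + c ⁅Z, X⁆ Y = 0)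

/-- `c` is a Chevalley–Eilenberg 2-coboundary on `𝔰` for the trivial representation on `ℂ`. -/
def IsCE2Coboundary (c : 𝔰 →ₗ[ℝ] 𝔰 →ₗ[ℝ] ℂ) : Prop :=
  ∃ α : 𝔰 →ₗ[ℝ] ℂ, ∀ X Y : 𝔰, c X Y = α ⁅X, Y⁆

section helpers
variable {H E : Fin r → 𝔰} {V : Fin r → Submodule ℝ 𝔰}

lemma psH_mem (j : Fin r) : H j ∈ psBlock H E V j :=
  le_sup_left (α := Submodule ℝ 𝔰) <| le_sup_left (α := Submodule ℝ 𝔰) <|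
    Submodule.mem_span_singleton_self _

lemma psV_le (j : Fin r) : V j ≤ psBlock H E V j :=
  le_trans le_sup_right le_sup_left

lemma psE_mem (j : Fin r) : E j ∈ psBlock H E V j :=
  le_sup_right (α := Submodule ℝ 𝔰) <| Submodule.mem_span_singleton_self _

lemma psBlock_le_upper {j k : Fin r} (h : j < k) :
    psBlock H E V k ≤ psUpper H E V j :=
  le_iSup_of_le k (le_iSup_of_le h le_rfl)

lemma psH_mem_upper {j k : Fin r} (h : j < k) : H k ∈ psUpper H E V j :=
  psBlock_le_upper h (psH_mem k)

lemma psE_mem_upper {j k : Fin r} (h : j < k) : E k ∈ psUpper H E V j :=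
  psBlock_le_upper h (psE_mem k)

lemma psV_mem_upper {j k : Fin r} (h : j < k) {v : 𝔰} (hv : v ∈ V k) :
    v ∈ psUpper H E V j :=
  psBlock_le_upper h (psV_le k hv)

lemma psBlock_le {j : Fin r} {Q : Submodule ℝ 𝔰} (h1 : H j ∈ Q) (h2 : V j ≤ Q)
    (h3 : E j ∈ Q) : psBlock H E V j ≤ Q := by
  refine sup_le (sup_le ?_ h2) ?_ <;> rw [Submodule.span_le, Set.singleton_subset_iff]
  exacts [h1, h3]

lemma mem_psBlock_iff {j : Fin r} {x : 𝔰} :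
    x ∈ psBlock H E V j ↔ ∃ a b : ℝ, ∃ v ∈ V j, x = a • H j + v + b • E j := by
  constructor
  · intro hx
    rw [psBlock, Submodule.mem_sup] at hx
    obtain ⟨y, hy, z, hz, rfl⟩ := hx
    rw [Submodule.mem_sup] at hy
    obtain ⟨u, hu, v, hv, rfl⟩ := hy
    rw [Submodule.mem_span_singleton] at hu hz
    obtain ⟨a, rfl⟩ := hu
    obtain ⟨b, rfl⟩ := hz
    exact ⟨a, b, v, hv, rfl⟩
  · rintro ⟨a, b, v, hv, rfl⟩
    exact Submodule.add_mem _ (Submodule.add_mem _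
      (le_sup_left (α := Submodule ℝ 𝔰) <| le_sup_left (α := Submodule ℝ 𝔰) <|
        Submodule.smul_mem _ a (Submodule.mem_span_singleton_self _)) (psV_le j hv))
      (le_sup_right (α := Submodule ℝ 𝔰) <| Submodule.smul_mem _ b
        (Submodule.mem_span_singleton_self _))

end helpers

section withP
variable {H E : Fin r → 𝔰} {V : Fin r → Submodule ℝ 𝔰} {Ω : Fin r → 𝔰 →ₗ[ℝ] 𝔰 →ₗ[ℝ] ℝ}
variable (P : IsPSAlgebra H E V Ω)

include P in
lemma ps_unique {j : Fin r} {a₁ a₂ b₁ b₂ : ℝ} {v₁ v₂ : 𝔰} (hv₁ : v₁ ∈ V j) (hv₂ : v₂ ∈ V j)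
    (h : a₁ • H j + v₁ + b₁ • E j = a₂ • H j + v₂ + b₂ • E j) :
    a₁ = a₂ ∧ v₁ = v₂ ∧ b₁ = b₂ := by
  have h0 : (a₁ - a₂) • H j + (v₁ - v₂) + (b₁ - b₂) • E j = 0 := by
    rw [sub_smul, sub_smul]
    rw [← sub_eq_zero] at h
    rw [← h]; abel
  obtain ⟨h1, h2, h3⟩ := P.inner_indep j _ _ _ (Submodule.sub_mem _ hv₁ hv₂) h0
  exact ⟨sub_eq_zero.mp h1, sub_eq_zero.mp h2, sub_eq_zero.mp h3⟩

include P in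
lemma exists_lin (a b : Fin r → ℂ) (ψ : Fin r → (𝔰 →ₗ[ℝ] ℂ)) :
    ∃ α : 𝔰 →ₗ[ℝ] ℂ, (∀ j, α (H j) = a j) ∧ (∀ j, ∀ v ∈ V j, α v = ψ j v) ∧
      (∀ j, α (E j) = b j) := by
  classical
  -- coordinates on each block
  have hrep : ∀ (j : Fin r) (x : psBlock H E V j),
      ∃ p : ℝ × 𝔰 × ℝ, p.2.1 ∈ V j ∧ (x : 𝔰) = p.1 • H j + p.2.1 + p.2.2 • E j := by
    intro j x
    obtain ⟨a', b', v, hv, hx⟩ := mem_psBlock_iff.mp x.2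
    exact ⟨(a', v, b'), hv, hx⟩
  choose p hpV hpeq using hrep
  set g : ∀ j : Fin r, psBlock H E V j → ℂ :=
    fun j x => (p j x).1 • a j + ψ j (p j x).2.1 + (p j x).2.2 • b j with hg
  have huniq : ∀ (j : Fin r) (x : psBlock H E V j) (a' b' : ℝ) (v : 𝔰), v ∈ V j →
      (x : 𝔰) = a' • H j + v + b' • E j →
      (p j x).1 = a' ∧ (p j x).2.1 = v ∧ (p j x).2.2 = b' := by
    intro j x a' b' v hv hx
    exact ps_unique P (hpV j x) hv ((hpeq j x).symm.trans hx)
  have hadd : ∀ (j : Fin r) (x y : psBlock H E V j), g j (x + y) = g j x + g j y := by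
    intro j x y
    obtain ⟨h1, h2, h3⟩ := huniq j (x + y) ((p j x).1 + (p j y).1) ((p j x).2.2 + (p j y).2.2)
      ((p j x).2.1 + (p j y).2.1) (Submodule.add_mem _ (hpV j x) (hpV j y))
      (by push_cast [hpeq j x, hpeq j y, add_smul]; abel)
    simp only [hg, h1, h2, h3, add_smul, map_add]
    ring_nf
  have hsmul : ∀ (j : Fin r) (t : ℝ) (x : psBlock H E V j), g j (t • x) = t • g j x := by
    intro j t x
    obtain ⟨h1, h2, h3⟩ := huniq j (t • x) (t * (p j x).1) (t * (p j x).2.2)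
      (t • (p j x).2.1) (Submodule.smul_mem _ _ (hpV j x))
      (by push_cast [hpeq j x, mul_smul, smul_add]; ring_nf)
    simp only [hg, h1, h2, h3, map_smul, mul_smul, smul_add]
  let β : ∀ j : Fin r, psBlock H E V j →ₗ[ℝ] ℂ := fun j => ⟨⟨g j, hadd j⟩, hsmul j⟩
  have hInt : DirectSum.IsInternal (psBlock H E V) :=
    DirectSum.isInternal_submodule_of_iSupIndep_of_iSup_eq_top P.indep P.total
  set e : DirectSum (Fin r) (fun j => psBlock H E V j) ≃ₗ[ℝ] 𝔰 :=
    LinearEquiv.ofBijective (DirectSum.coeLinearMap (psBlock H E V)) hInt with he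
  set α : 𝔰 →ₗ[ℝ] ℂ := (DirectSum.toModule ℝ (Fin r) ℂ β) ∘ₗ (e.symm : 𝔰 →ₗ[ℝ] _) with hα
  have hval : ∀ (j : Fin r) (x : 𝔰) (hx : x ∈ psBlock H E V j), α x = g j ⟨x, hx⟩ := by
    intro j x hx
    have : e.symm x = DirectSum.lof ℝ (Fin r) (fun j => psBlock H E V j) j ⟨x, hx⟩ := by
      rw [LinearEquiv.symm_apply_eq, he]
      simp [DirectSum.lof_eq_of, DirectSum.coeLinearMap_of]
      exact (DirectSum.coeLinearMap_of (psBlock H E V) j ⟨x, hx⟩).symm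
    simp only [hα, LinearMap.comp_apply, LinearEquiv.coe_coe, this, DirectSum.toModule_lof]
    rfl
  refine ⟨α, ?_, ?_, ?_⟩
  · intro j
    rw [hval j (H j) (psH_mem j)]
    obtain ⟨h1, h2, h3⟩ := huniq j ⟨H j, psH_mem j⟩ 1 0 0 (Submodule.zero_mem _) (by simp)
    simp [hg, h1, h2, h3]
  · intro j v hv
    rw [hval j v (psV_le j hv)]
    obtain ⟨h1, h2, h3⟩ := huniq j ⟨v, psV_le j hv⟩ 0 0 v hv (by simp)
    simp [hg, h1, h2, h3]
  · intro j
    rw [hval j (E j) (psE_mem j)]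
    obtain ⟨h1, h2, h3⟩ := huniq j ⟨E j, psE_mem j⟩ 0 1 0 (Submodule.zero_mem _) (by simp)
    simp [hg, h1, h2, h3]


include P in
lemma lie_HE (j : Fin r) : ⁅H j, E j⁆ = (2:ℝ) • E j := by
  have h := P.lie_H j 0 (Submodule.zero_mem _) 1
  simpa using h

include P in
lemma lie_Hv (j : Fin r) {v : 𝔰} (hv : v ∈ V j) : ⁅H j, v⁆ = v := by
  have h := P.lie_H j v hv 0
  simpa using h

include P in
lemma top_closure {Q : Submodule ℝ 𝔰} (h : ∀ j, H j ∈ Q ∧ V j ≤ Q ∧ E j ∈ Q) (x : 𝔰) :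
    x ∈ Q := by
  have hle : (⊤ : Submodule ℝ 𝔰) ≤ Q := by
    rw [← P.total]
    exact iSup_le fun j => psBlock_le (h j).1 (h j).2.1 (h j).2.2
  exact hle trivial

end withP

/-- The span of all `V j` and `E j` (contains the derived algebra). -/
def psM (E : Fin r → 𝔰) (V : Fin r → Submodule ℝ 𝔰) : Submodule ℝ 𝔰 :=
  ⨆ j, (V j ⊔ Submodule.span ℝ {E j})

section withP2
variable {H E : Fin r → 𝔰} {V : Fin r → Submodule ℝ 𝔰} {Ω : Fin r → 𝔰 →ₗ[ℝ] 𝔰 →ₗ[ℝ] ℝ}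
variable (P : IsPSAlgebra H E V Ω)

lemma psV_le_M (j : Fin r) : V j ≤ psM E V := le_iSup_of_le j le_sup_left

lemma psE_mem_M (j : Fin r) : E j ∈ psM E V :=
  Submodule.mem_iSup_of_mem (p := fun j => V j ⊔ Submodule.span ℝ {E j}) j
    (Submodule.mem_sup_right (Submodule.mem_span_singleton_self _))

include P in
lemma lie_mem_psM (x y : 𝔰) : ⁅x, y⁆ ∈ psM E V := by
  classical
  have skew : ∀ x y : 𝔰, ⁅y, x⁆ ∈ psM E V → ⁅x, y⁆ ∈ psM E V := by
    intro x y h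
    rw [← lie_skew]
    exact (psM E V).neg_mem h
  have key : ∀ (j k : Fin r) (x y : 𝔰), (x = H j ∨ x ∈ V j ∨ x = E j) →
      (y = H k ∨ y ∈ V k ∨ y = E k) → ⁅x, y⁆ ∈ psM E V := by
    intro j k x y hx hy
    rcases hx with rfl | hx | rfl <;> rcases hy with rfl | hy | rfl <;>
      rcases lt_trichotomy j k with hjk | rfl | hjk
    -- H H
    · exact skew _ _ (by rw [P.lie_upper_H j _ (psH_mem_upper hjk)]; exact Submodule.zero_mem _)
    · simp
    · rw [P.lie_upper_H k _ (psH_mem_upper hjk)]; exact Submodule.zero_mem _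
    -- H v
    · exact skew _ _ (by rw [P.lie_upper_H j _ (psV_mem_upper hjk hy)]; exact Submodule.zero_mem _)
    · rw [lie_Hv P j hy]; exact psV_le_M j hy
    · exact psV_le_M k (P.lie_upper_V k _ (psH_mem_upper hjk) _ hy)
    -- H E
    · exact skew _ _ (by rw [P.lie_upper_H j _ (psE_mem_upper hjk)]; exact Submodule.zero_mem _)
    · rw [lie_HE P j]; exact Submodule.smul_mem _ _ (psE_mem_M j)
    · rw [P.lie_upper_E k _ (psH_mem_upper hjk)]; exact Submodule.zero_mem _
    -- v H
    · exact skew _ _ (psV_le_M j (P.lie_upper_V j _ (psH_mem_upper hjk) _ hx))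
    · exact skew _ _ (by rw [lie_Hv P j hx]; exact psV_le_M j hx)
    · rw [P.lie_upper_H k _ (psV_mem_upper hjk hx)]; exact Submodule.zero_mem _
    -- v v
    · exact skew _ _ (psV_le_M j (P.lie_upper_V j _ (psV_mem_upper hjk hy) _ hx))
    · rw [P.lie_vv j _ hx _ hy]; exact Submodule.smul_mem _ _ (psE_mem_M j)
    · exact psV_le_M k (P.lie_upper_V k _ (psV_mem_upper hjk hx) _ hy)
    -- v E
    · exact skew _ _ (psV_le_M j (P.lie_upper_V j _ (psE_mem_upper hjk) _ hx))
    · rw [P.lie_vE j _ hx]; exact Submodule.zero_mem _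
    · rw [P.lie_upper_E k _ (psV_mem_upper hjk hx)]; exact Submodule.zero_mem _
    -- E H
    · exact skew _ _ (by rw [P.lie_upper_E j _ (psH_mem_upper hjk)]; exact Submodule.zero_mem _)
    · exact skew _ _ (by rw [lie_HE P j]; exact Submodule.smul_mem _ _ (psE_mem_M j))
    · rw [P.lie_upper_H k _ (psE_mem_upper hjk)]; exact Submodule.zero_mem _
    -- E v
    · exact skew _ _ (by rw [P.lie_upper_E j _ (psV_mem_upper hjk hy)]; exact Submodule.zero_mem _)
    · exact skew _ _ (by rw [P.lie_vE j _ hy]; exact Submodule.zero_mem _)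
    · exact psV_le_M k (P.lie_upper_V k _ (psE_mem_upper hjk) _ hy)
    -- E E
    · exact skew _ _ (by rw [P.lie_upper_E j _ (psE_mem_upper hjk)]; exact Submodule.zero_mem _)
    · simp
    · rw [P.lie_upper_E k _ (psE_mem_upper hjk)]; exact Submodule.zero_mem _
  -- lift to all of 𝔰
  have inner : ∀ (j : Fin r) (x : 𝔰), (x = H j ∨ x ∈ V j ∨ x = E j) →
      ∀ y : 𝔰, ⁅x, y⁆ ∈ psM E V := by
    intro j x hx y
    have hy : y ∈ (psM E V).comap ((LieAlgebra.ad ℝ 𝔰) x) := by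
      refine top_closure P (fun k => ⟨?_, fun w hw => ?_, ?_⟩) y <;>
        simp only [Submodule.mem_comap, LieAlgebra.ad_apply]
      · exact key j k x _ hx (Or.inl rfl)
      · exact key j k x _ hx (Or.inr (Or.inl hw))
      · exact key j k x _ hx (Or.inr (Or.inr rfl))
    simpa only [Submodule.mem_comap, LieAlgebra.ad_apply] using hy
  let Qout : Submodule ℝ 𝔰 :=
    { carrier := {x | ∀ y, ⁅x, y⁆ ∈ psM E V}
      add_mem' := fun hx hy z => by rw [add_lie]; exact (psM E V).add_mem (hx z) (hy z)
      zero_mem' := fun z => by rw [zero_lie]; exact (psM E V).zero_mem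
      smul_mem' := fun t x hx z => by rw [smul_lie]; exact (psM E V).smul_mem t (hx z) }
  have hx : x ∈ Qout := by
    refine top_closure P (fun j => ⟨?_, fun w hw => ?_, ?_⟩) x
    · exact inner j _ (Or.inl rfl)
    · exact inner j _ (Or.inr (Or.inl hw))
    · exact inner j _ (Or.inr (Or.inr rfl))
  exact hx y

end withP2


section part1
variable {H E : Fin r → 𝔰} {V : Fin r → Submodule ℝ 𝔰} {Ω : Fin r → 𝔰 →ₗ[ℝ] 𝔰 →ₗ[ℝ] ℝ}
variable (P : IsPSAlgebra H E V Ω)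

include P in
lemma surj_part (f : Fin r → Fin r → ℂ) :
    ∃ c : 𝔰 →ₗ[ℝ] 𝔰 →ₗ[ℝ] ℂ, IsCE2Cocycle c ∧
      ∀ j k : Fin r, j < k → c (H j) (H k) = f j k := by
  classical
  have hex : ∀ j : Fin r, ∃ α : 𝔰 →ₗ[ℝ] ℂ, (∀ k, α (H k) = if k = j then 1 else 0) ∧
      (∀ k, ∀ v ∈ V k, α v = 0) ∧ (∀ k, α (E k) = 0) := by
    intro j
    obtain ⟨α, h1, h2, h3⟩ := exists_lin P (fun k => if k = j then 1 else 0) 0 0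
    exact ⟨α, h1, fun k v hv => by simpa using h2 k v hv, fun k => by simpa using h3 k⟩
  choose h hH hV hE using hex
  have hker : ∀ (j : Fin r) (x y : 𝔰), h j ⁅x, y⁆ = 0 := by
    intro j x y
    have hle : psM E V ≤ LinearMap.ker (h j) := by
      refine iSup_le fun k => sup_le (fun v hv => ?_) ?_
      · exact LinearMap.mem_ker.mpr (hV j k v hv)
      · rw [Submodule.span_le, Set.singleton_subset_iff]
        exact LinearMap.mem_ker.mpr (hE j k)
    exact LinearMap.mem_ker.mp (hle (lie_mem_psM P x y))
  set g : Fin r → Fin r → ℂ :=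
    fun a b => if a < b then f a b else if b < a then -f b a else 0 with hgdef
  have hg' : ∀ a b, g b a = - g a b := by
    intro a b
    rcases lt_trichotomy a b with hab | rfl | hab
    · simp [hgdef, hab, not_lt_of_gt hab]
    · simp [hgdef]
    · simp [hgdef, hab, not_lt_of_gt hab]
  set c : 𝔰 →ₗ[ℝ] 𝔰 →ₗ[ℝ] ℂ := LinearMap.mk₂ ℝ
      (fun x y => ∑ a : Fin r, ∑ b : Fin r, g a b * (h a x) * (h b y))
      (by intro x x' y; simp only [map_add, mul_add, add_mul, Finset.sum_add_distrib])
      (by intro t x y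
          simp only [map_smul, Complex.real_smul, Finset.smul_sum]
          refine Finset.sum_congr rfl fun a _ => Finset.sum_congr rfl fun b _ => ?_
          ring)
      (by intro x y y'; simp only [map_add, mul_add, add_mul, Finset.sum_add_distrib])
      (by intro t x y
          simp only [map_smul, Complex.real_smul, Finset.smul_sum]
          refine Finset.sum_congr rfl fun a _ => Finset.sum_congr rfl fun b _ => ?_
          ring) with hc
  have hzero : ∀ x y z : 𝔰, c ⁅x, y⁆ z = 0 := by
    intro x y z
    simp only [hc, LinearMap.mk₂_apply]
    refine Finset.sum_eq_zero fun a _ => Finset.sum_eq_zero fun b _ => ?_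
    rw [hker a x y]; ring
  have hanti : ∀ x y : 𝔰, c x y = - c y x := by
    intro x y
    refine eq_neg_of_add_eq_zero_left ?_
    simp only [hc, LinearMap.mk₂_apply]
    rw [show (∑ a : Fin r, ∑ b : Fin r, g a b * (h a y) * (h b x))
        = ∑ a : Fin r, ∑ b : Fin r, g b a * (h b y) * (h a x) from Finset.sum_comm]
    rw [← Finset.sum_add_distrib]
    refine Finset.sum_eq_zero fun a _ => ?_
    rw [← Finset.sum_add_distrib]
    refine Finset.sum_eq_zero fun b _ => ?_
    rw [hg' a b]; ring
  refine ⟨c, ⟨hanti, fun x y z => by rw [hzero, hzero, hzero]; ring⟩, ?_⟩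
  intro j k hjk
  simp only [hc, LinearMap.mk₂_apply, hH]
  simp only [mul_ite, ite_mul, mul_one, mul_zero, one_mul, zero_mul,
    Finset.sum_ite_eq, Finset.mem_univ, if_true]
  simp [hgdef, hjk]

end part1

section part2
variable {H E : Fin r → 𝔰} {V : Fin r → Submodule ℝ 𝔰} {Ω : Fin r → 𝔰 →ₗ[ℝ] 𝔰 →ₗ[ℝ] ℝ}
variable (P : IsPSAlgebra H E V Ω)

include P in
lemma ker_part (c : 𝔰 →ₗ[ℝ] 𝔰 →ₗ[ℝ] ℂ) (hc : IsCE2Cocycle c)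
    (hvan : ∀ j k : Fin r, j < k → c (H j) (H k) = 0) : IsCE2Coboundary c := by
  classical
  obtain ⟨α, hα1, hα2, hα3⟩ :=
    exists_lin P 0 (fun j => c (H j) (E j) / 2) (fun j => c (H j))
  have hα1' : ∀ j, α (H j) = 0 := fun j => by simpa using hα1 j
  have hcc : ∀ x : 𝔰, c x x = 0 := fun x => by linear_combination (hc.1 x x) / 2
  have Gsym : ∀ x y : 𝔰, c y x = α ⁅y, x⁆ → c x y = α ⁅x, y⁆ := by
    intro x y hxy
    rw [hc.1 x y, hxy, ← lie_skew x y, map_neg]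
  -- skew-bracket helpers
  have sk : ∀ x y : 𝔰, ⁅x, y⁆ = 0 → ⁅y, x⁆ = 0 := by
    intro x y h
    rw [← lie_skew, h, neg_zero]
  -- (1) H H
  have cHH : ∀ j k : Fin r, c (H j) (H k) = α ⁅H j, H k⁆ := by
    intro j k
    rcases lt_trichotomy j k with hjk | rfl | hjk
    · rw [sk _ _ (P.lie_upper_H j _ (psH_mem_upper hjk)), map_zero, hvan j k hjk]
    · rw [lie_self, map_zero, hcc]
    · rw [P.lie_upper_H k _ (psH_mem_upper hjk), map_zero]
      linear_combination hc.1 (H j) (H k) - hvan k j hjk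
  -- (2) H v
  have cHv : ∀ (j k : Fin r) (v : 𝔰), v ∈ V k → c (H j) v = α ⁅H j, v⁆ := by
    intro j k v hv
    rcases lt_trichotomy j k with hjk | rfl | hjk
    · have b2 : ⁅H j, H k⁆ = 0 := sk _ _ (P.lie_upper_H j _ (psH_mem_upper hjk))
      have b3 : ⁅v, H j⁆ = 0 := P.lie_upper_H j _ (psV_mem_upper hjk hv)
      have jac := hc.2 (H j) (H k) v
      rw [b2, b3, lie_Hv P k hv] at jac
      rw [sk _ _ b3, map_zero]
      simp only [map_zero, LinearMap.zero_apply, zero_add, add_zero] at jac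
      linear_combination hc.1 (H j) v - jac
    · rw [lie_Hv P j hv, hα2 j v hv]
    · have hw : ⁅H j, v⁆ ∈ V k := P.lie_upper_V k _ (psH_mem_upper hjk) v hv
      have b2 : ⁅H k, H j⁆ = 0 := sk _ _ (P.lie_upper_H k _ (psH_mem_upper hjk))
      have b3 : ⁅v, H k⁆ = -v := by rw [← lie_skew, lie_Hv P k hv]
      have jac := hc.2 (H k) (H j) v
      rw [b2, b3] at jac
      rw [hα2 k _ hw]
      simp only [map_zero, LinearMap.zero_apply, map_neg, LinearMap.neg_apply,
        zero_add, add_zero] at jac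
      linear_combination hc.1 (H j) v - hc.1 ⁅H j, v⁆ (H k) + jac
  -- (3) H E
  have cHE : ∀ j k : Fin r, c (H j) (E k) = α ⁅H j, E k⁆ := by
    intro j k
    rcases lt_trichotomy j k with hjk | rfl | hjk
    · have b2 : ⁅H j, H k⁆ = 0 := sk _ _ (P.lie_upper_H j _ (psH_mem_upper hjk))
      have b3 : ⁅E k, H j⁆ = 0 := P.lie_upper_H j _ (psE_mem_upper hjk)
      have jac := hc.2 (H j) (H k) (E k)
      rw [b2, b3, lie_HE P k] at jac
      rw [sk _ _ b3, map_zero]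
      simp only [map_zero, LinearMap.zero_apply, map_smul, LinearMap.smul_apply,
        Complex.real_smul, Complex.ofReal_ofNat, zero_add, add_zero] at jac
      linear_combination hc.1 (H j) (E k) - jac / 2
    · rw [lie_HE P j, map_smul, hα3 j]
      push_cast [Complex.real_smul]
      ring
    · have b0 : ⁅H j, E k⁆ = 0 := P.lie_upper_E k _ (psH_mem_upper hjk)
      have b2 : ⁅H k, H j⁆ = 0 := sk _ _ (P.lie_upper_H k _ (psH_mem_upper hjk))
      have b3 : ⁅E k, H k⁆ = -((2:ℝ) • E k) := by rw [← lie_skew, lie_HE P k]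
      have jac := hc.2 (H k) (H j) (E k)
      rw [b0, b2, b3] at jac
      rw [b0, map_zero]
      simp only [map_zero, LinearMap.zero_apply, map_neg, LinearMap.neg_apply,
        map_smul, LinearMap.smul_apply, Complex.real_smul, Complex.ofReal_ofNat,
        zero_add, add_zero] at jac
      linear_combination hc.1 (H j) (E k) + jac / 2
  -- (4) v v
  have cvv0 : ∀ (j k : Fin r), j < k → ∀ v w : 𝔰, v ∈ V j → w ∈ V k →
      c v w = α ⁅v, w⁆ := by
    intro j k hjk v w hv hw
    have hwv : ⁅w, v⁆ ∈ V j := P.lie_upper_V j _ (psV_mem_upper hjk hw) v hv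
    have hvw : ⁅v, w⁆ ∈ V j := by
      rw [← lie_skew]
      exact (V j).neg_mem hwv
    have b3 : ⁅w, H j⁆ = 0 := P.lie_upper_H j _ (psV_mem_upper hjk hw)
    have jac := hc.2 (H j) v w
    rw [lie_Hv P j hv, b3] at jac
    rw [hα2 j _ hvw]
    simp only [map_zero, LinearMap.zero_apply, zero_add, add_zero] at jac
    linear_combination jac - hc.1 (H j) ⁅v, w⁆
  have cvvS : ∀ (j k : Fin r) (v w : 𝔰), v ∈ V j → w ∈ V k → c v w = α ⁅v, w⁆ := by
    intro j k v w hv hw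
    rcases lt_trichotomy j k with hjk | rfl | hjk
    · exact cvv0 j k hjk v w hv hw
    · have bvw : ⁅v, w⁆ = Ω j v w • E j := P.lie_vv j v hv w hw
      have b3 : ⁅w, H j⁆ = -w := by rw [← lie_skew, lie_Hv P j hw]
      have jac := hc.2 (H j) v w
      rw [lie_Hv P j hv, bvw, b3] at jac
      rw [bvw, map_smul, hα3 j]
      simp only [map_neg, LinearMap.neg_apply, map_smul, LinearMap.smul_apply,
        Complex.real_smul] at jac ⊢
      linear_combination jac / 2 + (hc.1 v w) / 2
        - ((Ω j v w : ℂ) / 2) * hc.1 (H j) (E j)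
    · exact Gsym v w (cvv0 k j hjk w v hw hv)
  -- (5) v E
  have cvE : ∀ (j k : Fin r) (v : 𝔰), v ∈ V j → c v (E k) = α ⁅v, E k⁆ := by
    intro j k v hv
    rcases lt_trichotomy j k with hjk | rfl | hjk
    · have hEv : ⁅E k, v⁆ ∈ V j := P.lie_upper_V j _ (psE_mem_upper hjk) v hv
      have hvE : ⁅v, E k⁆ ∈ V j := by
        rw [← lie_skew]
        exact (V j).neg_mem hEv
      have b3 : ⁅E k, H j⁆ = 0 := P.lie_upper_H j _ (psE_mem_upper hjk)
      have jac := hc.2 (H j) v (E k)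
      rw [lie_Hv P j hv, b3] at jac
      rw [hα2 j _ hvE]
      simp only [map_zero, LinearMap.zero_apply, zero_add, add_zero] at jac
      linear_combination jac - hc.1 (H j) ⁅v, E k⁆
    · have b0 : ⁅v, E j⁆ = 0 := P.lie_vE j v hv
      have b3 : ⁅E j, H j⁆ = -((2:ℝ) • E j) := by rw [← lie_skew, lie_HE P j]
      have jac := hc.2 (H j) v (E j)
      rw [lie_Hv P j hv, b0, b3] at jac
      rw [b0, map_zero]
      simp only [map_zero, LinearMap.zero_apply, map_neg, LinearMap.neg_apply,
        map_smul, LinearMap.smul_apply, Complex.real_smul, Complex.ofReal_ofNat,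
        zero_add, add_zero] at jac
      linear_combination jac / 3 + (2 / 3) * hc.1 v (E j)
    · have b0 : ⁅v, E k⁆ = 0 := P.lie_upper_E k v (psV_mem_upper hjk hv)
      have b1 : ⁅H k, v⁆ = 0 := sk _ _ (P.lie_upper_H k v (psV_mem_upper hjk hv))
      have b3 : ⁅E k, H k⁆ = -((2:ℝ) • E k) := by rw [← lie_skew, lie_HE P k]
      have jac := hc.2 (H k) v (E k)
      rw [b0, b1, b3] at jac
      rw [b0, map_zero]
      simp only [map_zero, LinearMap.zero_apply, map_neg, LinearMap.neg_apply,
        map_smul, LinearMap.smul_apply, Complex.real_smul, Complex.ofReal_ofNat,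
        zero_add, add_zero] at jac
      linear_combination hc.1 v (E k) + jac / 2
  -- (6) E E
  have cEE0 : ∀ (j k : Fin r), j < k → c (E j) (E k) = α ⁅E j, E k⁆ := by
    intro j k hjk
    have b0 : ⁅E j, E k⁆ = 0 := sk _ _ (P.lie_upper_E j _ (psE_mem_upper hjk))
    have b3 : ⁅E k, H j⁆ = 0 := P.lie_upper_H j _ (psE_mem_upper hjk)
    have jac := hc.2 (H j) (E j) (E k)
    rw [lie_HE P j, b0, b3] at jac
    rw [b0, map_zero]
    simp only [map_zero, LinearMap.zero_apply, map_smul, LinearMap.smul_apply,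
      Complex.real_smul, Complex.ofReal_ofNat, zero_add, add_zero] at jac
    linear_combination jac / 2
  have cEES : ∀ j k : Fin r, c (E j) (E k) = α ⁅E j, E k⁆ := by
    intro j k
    rcases lt_trichotomy j k with hjk | rfl | hjk
    · exact cEE0 j k hjk
    · rw [lie_self, map_zero, hcc]
    · exact Gsym _ _ (cEE0 k j hjk)
  -- swapped kinds
  have cvH : ∀ (j k : Fin r) (v : 𝔰), v ∈ V k → c v (H j) = α ⁅v, H j⁆ :=
    fun j k v hv => Gsym _ _ (cHv j k v hv)
  have cEH : ∀ j k : Fin r, c (E k) (H j) = α ⁅E k, H j⁆ :=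
    fun j k => Gsym _ _ (cHE j k)
  have cEv : ∀ (j k : Fin r) (v : 𝔰), v ∈ V j → c (E k) v = α ⁅E k, v⁆ :=
    fun j k v hv => Gsym _ _ (cvE j k v hv)
  -- assemble over generators
  have inner : ∀ (j : Fin r) (x : 𝔰), (x = H j ∨ x ∈ V j ∨ x = E j) →
      ∀ y : 𝔰, c x y = α ⁅x, y⁆ := by
    intro j x hx y
    let Qin : Submodule ℝ 𝔰 :=
      { carrier := {y | c x y = α ⁅x, y⁆}
        add_mem' := fun {y₁ y₂} h1 h2 => by
          simp only [Set.mem_setOf_eq] at h1 h2 ⊢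
          rw [map_add, lie_add, map_add, h1, h2]
        zero_mem' := by
          simp only [Set.mem_setOf_eq, map_zero, lie_zero]
        smul_mem' := fun t y hy => by
          simp only [Set.mem_setOf_eq] at hy ⊢
          rw [map_smul, lie_smul, map_smul, hy] }
    have hy : y ∈ Qin := by
      refine top_closure P (fun k => ⟨?_, fun w hw => ?_, ?_⟩) y
      · show c x (H k) = α ⁅x, H k⁆
        rcases hx with rfl | hx | rfl
        · exact cHH j k
        · exact cvH k j x hx
        · exact cEH k j
      · show c x w = α ⁅x, w⁆
        rcases hx with rfl | hx | rfl
        · exact cHv j k w hw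
        · exact cvvS j k x w hx hw
        · exact cEv k j w hw
      · show c x (E k) = α ⁅x, E k⁆
        rcases hx with rfl | hx | rfl
        · exact cHE j k
        · exact cvE j k x hx
        · exact cEES j k
    exact hy
  refine ⟨α, fun x y => ?_⟩
  let Qout : Submodule ℝ 𝔰 :=
    { carrier := {x | ∀ y, c x y = α ⁅x, y⁆}
      add_mem' := fun {x₁ x₂} h1 h2 z => by
        rw [map_add, add_lie, map_add, LinearMap.add_apply, h1 z, h2 z]
      zero_mem' := fun z => by
        rw [map_zero, zero_lie, map_zero, LinearMap.zero_apply]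
      smul_mem' := fun t x hx z => by
        rw [map_smul, smul_lie, map_smul, LinearMap.smul_apply, hx z] }
  have hx : x ∈ Qout := by
    refine top_closure P (fun j => ⟨?_, fun w hw => ?_, ?_⟩) x
    · exact inner j _ (Or.inl rfl)
    · exact inner j _ (Or.inr (Or.inl hw))
    · exact inner j _ (Or.inr (Or.inr rfl))
  exact hx y

end part2

/-- The map `Z² → ℂ^{r(r−1)/2}`, `c ↦ (c(H_j, H_k))_{j<k}`, is surjective
with kernel exactly the space `B²` of 2-coboundaries; hence it induces an isomorphism
`H²_CE(𝔰) ≃ ℂ^{r(r−1)/2}`. -/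
theorem statement11 {r : ℕ} (𝔰 : Type) [LieRing 𝔰] [LieAlgebra ℝ 𝔰] [Module.Finite ℝ 𝔰]
    (H E : Fin r → 𝔰) (V : Fin r → Submodule ℝ 𝔰) (Ω : Fin r → 𝔰 →ₗ[ℝ] 𝔰 →ₗ[ℝ] ℝ)
    (P : IsPSAlgebra H E V Ω) :
    -- surjectivity: every family `(f j k)_{j<k}` is attained by some 2-cocycle …
    (∀ f : Fin r → Fin r → ℂ, ∃ c : 𝔰 →ₗ[ℝ] 𝔰 →ₗ[ℝ] ℂ, IsCE2Cocycle c ∧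
      ∀ j k : Fin r, j < k → c (H j) (H k) = f j k) ∧
    -- … and the kernel consists exactly of the 2-coboundaries:
    (∀ c : 𝔰 →ₗ[ℝ] 𝔰 →ₗ[ℝ] ℂ, IsCE2Cocycle c →
      (IsCE2Coboundary c ↔ ∀ j k : Fin r, j < k → c (H j) (H k) = 0)) := by
  refine ⟨fun f => surj_part P f, fun c hc => ⟨?_, fun h => ker_part P c hc h⟩⟩
  rintro ⟨β, hβ⟩ j k hjk
  have b : ⁅H j, H k⁆ = 0 := by
    rw [← lie_skew, P.lie_upper_H j _ (psH_mem_upper hjk), neg_zero]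
  rw [hβ, b, map_zero]
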